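/- Let m ≥ 2, γ ∈ (0, 1), β ∈ (0, 1], and let s be an integer with 1 ≤ s ≤ m − 1. Then for every y with 0 < y ≤ 1: (m + 1 − γ)·(1 − y^β/(1+y)^β) > γ s · (y^β − y^β/(1+y)^β). Consequently, in the data-sharing-treaty game, a singleton firm F with data n_F always strictly gains by joining a coalition S whose total data n_S satisfies n_S ≥ n_F (taking y = n_F/n_S), so in any Nash equilibrium the set of firms that join the treaty is upward-closed in data size. -/

import Mathlib

/-- **Joining a larger coalition is always profitable (Lemma 6).** For `m ≥ 2` firms,
`γ ∈ (0,1)`, `β ∈ (0,1]`, and any integer coalition size `1 ≤ s ≤ m - 1`, for every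
`y ∈ (0, 1]` (representing the ratio `n_F/n_S ≤ 1` of the singleton firm's data to the
coalition's data):
`(m + 1 - γ)(1 - y^β/(1+y)^β) > γ s (y^β - y^β/(1+y)^β)`.
Hence in the data-sharing-treaty game a singleton firm always strictly gains by joining
a coalition with at least as much data, so the equilibrium treaty membership is
upward-closed in data size. -/
theorem treaty_joining_inequality
    (m : ℕ) (hm : 2 ≤ m) (γ β : ℝ)
    (hγ₁ : 0 < γ) (hγ₂ : γ < 1) (hβ₁ : 0 < β) (hβ₂ : β ≤ 1)
    (s : ℕ) (hs₁ : 1 ≤ s) (hs₂ : s ≤ m - 1) :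
    ∀ y : ℝ, 0 < y → y ≤ 1 →
      ((m : ℝ) + 1 - γ) * (1 - y ^ β / (1 + y) ^ β) >
        γ * (s : ℝ) * (y ^ β - y ^ β / (1 + y) ^ β) := by
  intro y hy hy1
  have hU : 0 < y ^ β := Real.rpow_pos_of_pos hy β
  have hU1 : y ^ β ≤ 1 := Real.rpow_le_one hy.le hy1 hβ₁.le
  have hV1 : 1 < (1 + y) ^ β :=
    Real.one_lt_rpow_iff_of_pos (by linarith) |>.mpr (Or.inl ⟨by linarith, hβ₁⟩)
  have hUV : y ^ β < (1 + y) ^ β := Real.rpow_lt_rpow hy.le (by linarith) hβ₁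
  have hsm : (s : ℝ) ≤ (m : ℝ) - 1 := by
    have h1 : (s : ℝ) ≤ ((m - 1 : ℕ) : ℝ) := Nat.cast_le.mpr hs₂
    have h2 : ((m - 1 : ℕ) : ℝ) = (m : ℝ) - 1 := by
      have : 1 ≤ m := by omega
      push_cast [Nat.cast_sub this]
      ring
    linarith [h1, h2.le]
  have hs0 : (1 : ℝ) ≤ (s : ℝ) := by exact_mod_cast hs₁
  set U := y ^ β with hUdef
  set V := (1 + y) ^ β with hVdef
  have hV0 : (0 : ℝ) < V := lt_trans one_pos hV1
  have key : γ * s * (U * (V - 1)) < ((m : ℝ) + 1 - γ) * (V - U) := by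
    have hm2 : (2 : ℝ) ≤ (m : ℝ) := by exact_mod_cast hm
    have hA : γ * s * (U * (V - 1)) ≤ γ * s * (V - 1) := by
      nlinarith [mul_nonneg (mul_nonneg hγ₁.le (by linarith : (0:ℝ) ≤ (s:ℝ)))
        (mul_nonneg (by linarith : (0:ℝ) ≤ V - 1) (by linarith : (0:ℝ) ≤ 1 - U))]
    have hB : γ * s * (V - 1) ≤ γ * ((m : ℝ) - 1) * (V - 1) := by
      nlinarith [mul_nonneg (mul_nonneg hγ₁.le (by linarith : (0:ℝ) ≤ (m:ℝ) - 1 - s))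
        (by linarith : (0:ℝ) ≤ V - 1)]
    have hC : γ * ((m : ℝ) - 1) * (V - 1) < ((m : ℝ) + 1 - γ) * (V - 1) := by
      have h1 : (0:ℝ) < (m:ℝ) * (1 - γ) := mul_pos (by linarith) (by linarith)
      nlinarith [mul_pos (by linarith : (0:ℝ) < (m:ℝ) + 1 - γ - γ * ((m:ℝ) - 1))
        (by linarith : (0:ℝ) < V - 1)]
    have hD : ((m : ℝ) + 1 - γ) * (V - 1) ≤ ((m : ℝ) + 1 - γ) * (V - U) := by
      nlinarith [mul_nonneg (by linarith : (0:ℝ) ≤ (m:ℝ) + 1 - γ)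
        (by linarith : (0:ℝ) ≤ 1 - U)]
    linarith
  rw [gt_iff_lt, ← sub_pos]
  have expand : ((m : ℝ) + 1 - γ) * (1 - U / V) - γ * s * (U - U / V)
      = (((m : ℝ) + 1 - γ) * (V - U) - γ * s * (U * (V - 1))) / V := by
    field_simp
  rw [expand]
  exact div_pos (by linarith) hV0
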